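/- Let R be a commutative ring and let f be a polynomial over the ring of dual numbers R[α], written uniquely as f = f₁ + α·f₂ with f₁, f₂ ∈ R[x]. Then f is a null polynomial on R[α] if and only if f₁, the formal derivative f₁′, and f₂ are all null polynomials on R. -/
import Mathlib


open Polynomial

lemma fst_aeval_dual {R : Type*} [CommRing R] (z : DualNumber R) (f : R[X]) :
    (aeval z f).fst = eval z.fst f := by
  induction f using Polynomial.induction_on' with
  | add p q hp hq => simp [hp, hq]
  | monomial n a =>
      simp [TrivSqZeroExt.fst_mul, TrivSqZeroExt.fst_pow,
        TrivSqZeroExt.algebraMap_eq_inl']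

lemma snd_aeval_dual {R : Type*} [CommRing R] (z : DualNumber R) (f : R[X]) :
    (aeval z f).snd = z.snd * eval z.fst (derivative f) := by
  induction f using Polynomial.induction_on' with
  | add p q hp hq => simp [hp, hq]; ring
  | monomial n a =>
    cases n with
    | zero => simp [TrivSqZeroExt.algebraMap_eq_inl']
    | succ n =>
      simp [TrivSqZeroExt.snd_mul, TrivSqZeroExt.snd_pow, TrivSqZeroExt.fst_pow,
        TrivSqZeroExt.algebraMap_eq_inl', derivative_monomial]
      ring

/-- **Theorem (null polynomials on R[α]).**
Let `R` be a commutative ring and `f = f₁ + α·f₂` a polynomial over the dual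
numbers `R[α]` (with `f₁, f₂ ∈ R[x]`).  Then `f` is a null polynomial on `R[α]`
iff `f₁`, `f₁'` and `f₂` are null polynomials on `R`. -/
theorem null_poly_dualNumber_iff (R : Type*) [CommRing R] (f₁ f₂ : R[X]) :
    (∀ z : DualNumber R, aeval z f₁ + DualNumber.eps * aeval z f₂ = 0) ↔
      (∀ a : R, eval a f₁ = 0) ∧ (∀ a : R, eval a (derivative f₁) = 0) ∧
        (∀ a : R, eval a f₂ = 0) := by
  have key : ∀ z : DualNumber R,
      aeval z f₁ + DualNumber.eps * aeval z f₂ =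
        TrivSqZeroExt.inl (eval z.fst f₁) +
          TrivSqZeroExt.inr (z.snd * eval z.fst (derivative f₁) + eval z.fst f₂) := by
    intro z
    refine TrivSqZeroExt.ext ?_ ?_
    · simp [fst_aeval_dual, TrivSqZeroExt.fst_mul, DualNumber.fst_eps]
    · simp [snd_aeval_dual, fst_aeval_dual, TrivSqZeroExt.snd_mul, DualNumber.fst_eps, DualNumber.snd_eps]
  constructor
  · intro h
    have h1 : ∀ a : R, eval a f₁ = 0 := by
      intro a
      have := congrArg TrivSqZeroExt.fst ((key (TrivSqZeroExt.inl a)).symm.trans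
        (h (TrivSqZeroExt.inl a)))
      simpa using this
    have h2 : ∀ a : R, eval a f₂ = 0 := by
      intro a
      have := congrArg TrivSqZeroExt.snd ((key (TrivSqZeroExt.inl a)).symm.trans
        (h (TrivSqZeroExt.inl a)))
      simpa using this
    refine ⟨h1, ?_, h2⟩
    intro a
    have := congrArg TrivSqZeroExt.snd ((key (TrivSqZeroExt.inl a + DualNumber.eps)).symm.trans
      (h (TrivSqZeroExt.inl a + DualNumber.eps)))
    simp [DualNumber.fst_eps, DualNumber.snd_eps, h2 a] at this
    exact this
  · rintro ⟨h1, h1', h2⟩ z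
    rw [key]
    simp [h1, h1', h2]
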